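/- With S1000(N) = (3^N - 1)/2, and S909, S727, S636 defined by the recurrences S909(N+1) = S727(N) + 2*S1000(N) + 1; S727(N+1) = S909(N) + 2*S909(N-1) + 2*S1000(N-1) + 3; S636(N+1) = S636(N) + 2*S909(N-1) + 2*S1000(N-1) + 3 (with initial values S909(1)=S727(1)=S636(1)=1, S727(2)=S636(2)=4), define S606 by S606(1)=1, S606(2)=4, and S606(N+1) = S636(N) + S636(N-1) + S909(N-1) + 2*S1000(N-1) + 3 for N ≥ 2. Then S606(N)/S1000(N) tends to 20/33 as N → ∞. -/

import Mathlib

open Filter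

theorem duration_limit_606 (S1000 S909 S727 S636 S606 : ℕ → ℕ)
    (h1000 : ∀ N, S1000 N = (3 ^ N - 1) / 2)
    (h909_1 : S909 1 = 1) (h727_1 : S727 1 = 1) (h636_1 : S636 1 = 1)
    (h727_2 : S727 2 = 4) (h636_2 : S636 2 = 4)
    (h606_1 : S606 1 = 1) (h606_2 : S606 2 = 4)
    (h909 : ∀ N ≥ 1, S909 (N + 1) = S727 N + 2 * S1000 N + 1)
    (h727 : ∀ N ≥ 2, S727 (N + 1) = S909 N + 2 * S909 (N - 1) + 2 * S1000 (N - 1) + 3)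
    (h636 : ∀ N ≥ 2, S636 (N + 1) = S636 N + 2 * S909 (N - 1) + 2 * S1000 (N - 1) + 3)
    (h606 : ∀ N ≥ 2, S606 (N + 1) = S636 N + S636 (N - 1) + S909 (N - 1) + 2 * S1000 (N - 1) + 3) :
    Tendsto (fun N => (S606 N : ℝ) / (S1000 N : ℝ)) atTop (nhds (20 / 33)) := by
  -- basic facts about S1000
  have hS : ∀ N, 2 * S1000 N = 3 ^ N - 1 := by
    intro N
    rw [h1000]
    have h1 : 3 ^ N % 2 = 1 := by
      rw [Nat.pow_mod]; simp
    omega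
  have hSZ : ∀ N, (2 : ℤ) * (S1000 N : ℤ) = 3 ^ N - 1 := by
    intro N
    have h := hS N
    have h1 : 1 ≤ 3 ^ N := Nat.one_le_pow _ _ (by norm_num)
    zify [h1] at h
    exact_mod_cast h
  -- small values
  have hS1 : S1000 1 = 1 := by rw [h1000]; norm_num
  have hS2 : S1000 2 = 4 := by rw [h1000]; norm_num
  have s909_2 : S909 2 = 4 := by
    have h := h909 1 le_rfl
    rw [h727_1, hS1] at h
    norm_num at h
    exact h
  have s909_3 : S909 3 = 13 := by
    have h := h909 2 (by norm_num)
    rw [h727_2, hS2] at h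
    norm_num at h
    exact h
  -- recurrences in ℤ
  have r9 : ∀ M : ℕ, (S909 (M + 4) : ℤ) =
      (S909 (M + 2) : ℤ) + 2 * (S909 (M + 1) : ℤ) + 10 * 3 ^ (M + 1) + 2 := by
    intro M
    have h1 := h909 (M + 3) (by omega)
    have h2 := h727 (M + 2) (by omega)
    norm_num at h1 h2
    have h1' : (S909 (M + 4) : ℤ) = (S727 (M + 3) : ℤ) + 2 * (S1000 (M + 3) : ℤ) + 1 := by
      exact_mod_cast congrArg (Nat.cast : ℕ → ℤ) h1
    have h2' : (S727 (M + 3) : ℤ) = (S909 (M + 2) : ℤ) + 2 * (S909 (M + 1) : ℤ)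
        + 2 * (S1000 (M + 1) : ℤ) + 3 := by
      exact_mod_cast congrArg (Nat.cast : ℕ → ℤ) h2
    have c1 := hSZ (M + 3)
    have c3 := hSZ (M + 1)
    linear_combination h1' + h2' + c1 + c3
  have r6 : ∀ M : ℕ, (S636 (M + 3) : ℤ) =
      (S636 (M + 2) : ℤ) + 2 * (S909 (M + 1) : ℤ) + 3 ^ (M + 1) + 2 := by
    intro M
    have h2 := h636 (M + 2) (by omega)
    norm_num at h2
    have h2' : (S636 (M + 3) : ℤ) = (S636 (M + 2) : ℤ) + 2 * (S909 (M + 1) : ℤ)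
        + 2 * (S1000 (M + 1) : ℤ) + 3 := by
      exact_mod_cast congrArg (Nat.cast : ℕ → ℤ) h2
    have c3 := hSZ (M + 1)
    linear_combination h2' + c3
  have r0 : ∀ M : ℕ, (S606 (M + 3) : ℤ) =
      (S636 (M + 2) : ℤ) + (S636 (M + 1) : ℤ) + (S909 (M + 1) : ℤ) + 3 ^ (M + 1) + 2 := by
    intro M
    have h2 := h606 (M + 2) (by omega)
    norm_num at h2
    have h2' : (S606 (M + 3) : ℤ) = (S636 (M + 2) : ℤ) + (S636 (M + 1) : ℤ)
        + (S909 (M + 1) : ℤ) + 2 * (S1000 (M + 1) : ℤ) + 3 := by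
      exact_mod_cast congrArg (Nat.cast : ℕ → ℤ) h2
    have c3 := hSZ (M + 1)
    linear_combination h2' + c3
  -- error bounds
  have b9 : ∀ n : ℕ, |11 * ((S909 (n + 1) : ℤ)) - 5 * 3 ^ (n + 1) + 11| ≤ 7 * 2 ^ (n + 1) := by
    intro n
    induction n using Nat.strong_induction_on with
    | _ n ih =>
      rcases n with _ | _ | _ | m
      · norm_num [h909_1]
      · norm_num [s909_2]
      · norm_num [s909_3]
      · have h1 := ih (m + 1) (by omega)
        have h2 := ih m (by omega)
        have key : 11 * ((S909 (m + 3 + 1) : ℤ)) - 5 * 3 ^ (m + 3 + 1) + 11 =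
            (11 * ((S909 (m + 1 + 1) : ℤ)) - 5 * 3 ^ (m + 1 + 1) + 11) +
            2 * (11 * ((S909 (m + 1) : ℤ)) - 5 * 3 ^ (m + 1) + 11) := by
          linear_combination (11 : ℤ) * r9 m
        rw [key]
        have habs : |2 * (11 * ((S909 (m + 1) : ℤ)) - 5 * 3 ^ (m + 1) + 11)| =
            2 * |11 * ((S909 (m + 1) : ℤ)) - 5 * 3 ^ (m + 1) + 11| := by
          rw [abs_mul]; norm_num
        have p1 : (2 : ℤ) ^ (m + 1 + 1) = 2 * 2 ^ (m + 1) := by ring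
        have p2 : (2 : ℤ) ^ (m + 3 + 1) = 8 * 2 ^ (m + 1) := by ring
        have h0 : (0 : ℤ) ≤ 2 ^ (m + 1) := by positivity
        refine le_trans (abs_add_le _ _) ?_
        rw [habs]
        linarith
  have b6 : ∀ n : ℕ, |22 * ((S636 (n + 1) : ℤ)) - 7 * 3 ^ (n + 1)| ≤ 15 * 2 ^ (n + 1) := by
    intro n
    induction n using Nat.strong_induction_on with
    | _ n ih =>
      rcases n with _ | _ | m
      · norm_num [h636_1]
      · norm_num [h636_2]
      · have h1 := ih (m + 1) (by omega)
        have h2 := b9 m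
        have key : 22 * ((S636 (m + 2 + 1) : ℤ)) - 7 * 3 ^ (m + 2 + 1) =
            (22 * ((S636 (m + 1 + 1) : ℤ)) - 7 * 3 ^ (m + 1 + 1)) +
            4 * (11 * ((S909 (m + 1) : ℤ)) - 5 * 3 ^ (m + 1) + 11) := by
          linear_combination (22 : ℤ) * r6 m
        rw [key]
        have habs : |4 * (11 * ((S909 (m + 1) : ℤ)) - 5 * 3 ^ (m + 1) + 11)| =
            4 * |11 * ((S909 (m + 1) : ℤ)) - 5 * 3 ^ (m + 1) + 11| := by
          rw [abs_mul]; norm_num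
        have p1 : (2 : ℤ) ^ (m + 1 + 1) = 2 * 2 ^ (m + 1) := by ring
        have p2 : (2 : ℤ) ^ (m + 2 + 1) = 4 * 2 ^ (m + 1) := by ring
        have h0 : (0 : ℤ) ≤ 2 ^ (m + 1) := by positivity
        refine le_trans (abs_add_le _ _) ?_
        rw [habs]
        linarith
  have b0 : ∀ n : ℕ, |66 * ((S606 (n + 1) : ℤ)) - 20 * 3 ^ (n + 1)| ≤ 64 * 2 ^ (n + 1) := by
    intro n
    induction n using Nat.strong_induction_on with
    | _ n ih =>
      rcases n with _ | _ | m
      · norm_num [h606_1]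
      · norm_num [h606_2]
      · have h1 := b6 (m + 1)
        have h2 := b6 m
        have h3 := b9 m
        have key : 66 * ((S606 (m + 2 + 1) : ℤ)) - 20 * 3 ^ (m + 2 + 1) =
            ((3 * (22 * ((S636 (m + 1 + 1) : ℤ)) - 7 * 3 ^ (m + 1 + 1)) +
            3 * (22 * ((S636 (m + 1) : ℤ)) - 7 * 3 ^ (m + 1))) +
            6 * (11 * ((S909 (m + 1) : ℤ)) - 5 * 3 ^ (m + 1) + 11)) + 66 := by
          linear_combination (66 : ℤ) * r0 m
        rw [key]
        have e1 : |3 * (22 * ((S636 (m + 1 + 1) : ℤ)) - 7 * 3 ^ (m + 1 + 1))| =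
            3 * |22 * ((S636 (m + 1 + 1) : ℤ)) - 7 * 3 ^ (m + 1 + 1)| := by
          rw [abs_mul]; norm_num
        have e2 : |3 * (22 * ((S636 (m + 1) : ℤ)) - 7 * 3 ^ (m + 1))| =
            3 * |22 * ((S636 (m + 1) : ℤ)) - 7 * 3 ^ (m + 1)| := by
          rw [abs_mul]; norm_num
        have e3 : |6 * (11 * ((S909 (m + 1) : ℤ)) - 5 * 3 ^ (m + 1) + 11)| =
            6 * |11 * ((S909 (m + 1) : ℤ)) - 5 * 3 ^ (m + 1) + 11| := by
          rw [abs_mul]; norm_num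
        have p1 : (2 : ℤ) ^ (m + 1 + 1) = 2 * 2 ^ (m + 1) := by ring
        have p2 : (2 : ℤ) ^ (m + 2 + 1) = 4 * 2 ^ (m + 1) := by ring
        have h4 : (2 : ℤ) ≤ 2 ^ (m + 1) := by
          calc (2 : ℤ) = 2 ^ 1 := by norm_num
          _ ≤ 2 ^ (m + 1) := pow_le_pow_right₀ (by norm_num) (by omega)
        refine le_trans (abs_add_le _ _) ?_
        refine le_trans (add_le_add_left (abs_add_le _ _) _) ?_
        refine le_trans (add_le_add_left (add_le_add_left (abs_add_le _ _) _) _) ?_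
        rw [e1, e2, e3]
        have habs66 : |(66 : ℤ)| = 66 := by norm_num
        rw [habs66]
        linarith
  -- real versions
  have b0R : ∀ m : ℕ, |66 * ((S606 (m + 1) : ℝ)) - 20 * 3 ^ (m + 1)| ≤ 64 * 2 ^ (m + 1) := by
    intro m
    exact_mod_cast b0 m
  have hSR : ∀ n, (S1000 n : ℝ) = (3 ^ n - 1) / 2 := by
    intro n
    have h := hSZ n
    have h' : (2 : ℝ) * (S1000 n : ℝ) = 3 ^ n - 1 := by exact_mod_cast h
    linarith
  -- numerator limit
  have hnum : Tendsto (fun n : ℕ => (66 / 3 ^ n) * (S606 n : ℝ)) atTop (nhds 20) := by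
    have h0 : Tendsto (fun n : ℕ => (66 / 3 ^ n) * (S606 n : ℝ) - 20) atTop (nhds 0) := by
      apply squeeze_zero_norm' (a := fun n : ℕ => 64 * (2 / 3 : ℝ) ^ n)
      · filter_upwards [eventually_ge_atTop 1] with n hn
        obtain ⟨m, rfl⟩ : ∃ m, n = m + 1 := ⟨n - 1, by omega⟩
        have hb := b0R m
        have h3 : (0 : ℝ) < 3 ^ (m + 1) := by positivity
        have heq : (66 / 3 ^ (m + 1)) * (S606 (m + 1) : ℝ) - 20 =
            (66 * ((S606 (m + 1) : ℝ)) - 20 * 3 ^ (m + 1)) / 3 ^ (m + 1) := by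
          field_simp
        rw [Real.norm_eq_abs, heq, abs_div, abs_of_pos h3, div_le_iff₀ h3]
        calc |66 * ((S606 (m + 1) : ℝ)) - 20 * 3 ^ (m + 1)| ≤ 64 * 2 ^ (m + 1) := hb
          _ = 64 * (2 / 3 : ℝ) ^ (m + 1) * 3 ^ (m + 1) := by
            rw [div_pow]; field_simp
          _ = _ := by ring
      · have ht := tendsto_pow_atTop_nhds_zero_of_lt_one
          (by norm_num : (0:ℝ) ≤ 2 / 3) (by norm_num : (2:ℝ) / 3 < 1)
        have := ht.const_mul (64 : ℝ)
        simpa using this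
    have := h0.add_const 20
    simpa using this
  -- denominator limit
  have hden : Tendsto (fun n : ℕ => (66 / 3 ^ n) * (S1000 n : ℝ)) atTop (nhds 33) := by
    have heq : ∀ n : ℕ, (66 / 3 ^ n) * (S1000 n : ℝ) = 33 - 33 * (1 / 3 : ℝ) ^ n := by
      intro n
      rw [hSR n]
      have h3 : (3 : ℝ) ^ n ≠ 0 := by positivity
      rw [div_pow, one_pow]
      field_simp
      ring
    simp only [heq]
    have ht := tendsto_pow_atTop_nhds_zero_of_lt_one
      (by norm_num : (0:ℝ) ≤ 1 / 3) (by norm_num : (1:ℝ) / 3 < 1)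
    have h2 := (ht.const_mul (33 : ℝ))
    have h3 := (tendsto_const_nhds (x := (33:ℝ)) (f := atTop (α := ℕ))).sub h2
    simpa using h3
  have final := hnum.div hden (by norm_num : (33 : ℝ) ≠ 0)
  refine final.congr fun n => ?_
  simp only [Pi.div_apply]
  exact mul_div_mul_left _ _ (by positivity : (66 : ℝ) / 3 ^ n ≠ 0)
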